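/- Let p be a prime, 0 < α < 1, and define C_α(θ) := −Γ_p((1+α)/2 + θ) · Γ_p((1+α)/2 − θ) for real θ ≥ 0 with θ ≠ (1+α)/2. Then: (1) C_α(0) = −(Γ_p((1+α)/2))²; (2) C_α((1−α)/2) = 0; (3) C_α is continuous and strictly increasing on [0,(1+α)/2); (4) C_α(θ) → +∞ as θ ↑ (1+α)/2; (5) C_α is continuous and strictly increasing on ((1+α)/2, ∞) with C_α(θ) → −∞ as θ ↓ (1+α)/2; (6) C_α(θ) → −p^α as θ → +∞, and −p^α < C_α(0). -/

import Mathlib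

open Filter

/-- The `p`-adic Gamma function `Γ_p(z) = (1 - p^(z-1)) / (1 - p^(-z))`. -/
noncomputable def gammaP (p : ℕ) (z : ℝ) : ℝ :=
  (1 - (p : ℝ) ^ (z - 1)) / (1 - (p : ℝ) ^ (-z))

/-- The function `C_α(θ) = -Γ_p((1+α)/2 + θ) Γ_p((1+α)/2 - θ)`. -/
noncomputable def Cfun (p : ℕ) (α θ : ℝ) : ℝ :=
  -(gammaP p ((1 + α) / 2 + θ) * gammaP p ((1 + α) / 2 - θ))

section CfunAux

/-- The core algebraic identity: the product of the two gamma factors, written in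
terms of `x = p^((1+α)/2)` and `u = p^θ`, is a Möbius-type function of `u + 1/u`. -/
lemma frac_eq' (b x u : ℝ) (hb : 1 < b) (hx : 1 < x) (hu : 1 ≤ u) (hux : u ≠ x) :
    -((1 - x*u/b)/(1 - (x*u)⁻¹) * ((1 - x/(u*b))/(1 - u/x)))
      = -x^2/b + (x*(b-1)*(x^2-b)/b^2) / ((x + 1/x) - (u + 1/u)) := by
  have hb0 : (0:ℝ) < b := by linarith
  have hx0 : (0:ℝ) < x := by linarith
  have hu0 : (0:ℝ) < u := by linarith
  have hxu1 : 1 < x*u := by nlinarith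
  have hd1 : 1 - (x*u)⁻¹ ≠ 0 := by
    have : (x*u)⁻¹ < 1 := by rw [inv_lt_one_iff₀]; right; exact hxu1
    linarith
  have hd2 : 1 - u/x ≠ 0 := by
    intro h
    apply hux
    field_simp at h
    linarith
  have hd3 : (x + 1/x) - (u + 1/u) ≠ 0 := by
    have hkey : (x + 1/x) - (u + 1/u) = (x - u)*(x*u - 1)/(x*u) := by
      field_simp; ring
    rw [hkey]
    apply div_ne_zero
    · exact mul_ne_zero (sub_ne_zero.mpr (Ne.symm hux)) (by intro h; nlinarith)
    · positivity
  have hD : (1 - (x*u)⁻¹)*(1 - u/x) ≠ 0 := mul_ne_zero hd1 hd2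
  rw [div_mul_div_comm, ← neg_div, div_add_div _ _ (by positivity : (b:ℝ) ≠ 0) hd3,
    div_eq_div_iff hD (mul_ne_zero (by positivity : (b:ℝ) ≠ 0) hd3)]
  field_simp
  ring

lemma div_lt_div_helper' {K c d : ℝ} (hK : 0 < K) (hdc : d < c) (hcd : 0 < c * d) :
    K / c < K / d := by
  have hc : c ≠ 0 := by rintro rfl; simp at hcd
  have hd : d ≠ 0 := by rintro rfl; simp at hcd
  have h : K/d - K/c = K*(c-d)/(c*d) := by field_simp
  have h2 : 0 < K*(c-d)/(c*d) := div_pos (mul_pos hK (by linarith)) hcd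
  rw [← h] at h2
  linarith

/-- The auxiliary function `H b θ = b^θ + 1/b^θ`. -/
noncomputable def Hfun (b θ : ℝ) : ℝ := b ^ θ + 1 / b ^ θ

lemma Hfun_mono {b : ℝ} (hb : 1 < b) {θ₁ θ₂ : ℝ} (h0 : 0 ≤ θ₁) (h12 : θ₁ < θ₂) :
    Hfun b θ₁ < Hfun b θ₂ := by
  have hb0 : (0:ℝ) < b := by linarith
  set u := b ^ θ₁ with hu
  set v := b ^ θ₂ with hv
  have hu1 : 1 ≤ u := by
    rw [hu, show (1:ℝ) = b ^ (0:ℝ) by simp]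
    exact (Real.rpow_le_rpow_left_iff hb).mpr h0
  have huv : u < v := (Real.rpow_lt_rpow_left_iff hb).mpr h12
  have hu0 : (0:ℝ) < u := by linarith
  have hv0 : (0:ℝ) < v := by linarith
  have hkey : Hfun b θ₂ - Hfun b θ₁ = (v - u)*(u*v - 1)/(u*v) := by
    rw [Hfun, Hfun, ← hu, ← hv]
    field_simp
    ring
  have : 0 < (v - u)*(u*v - 1)/(u*v) :=
    div_pos (mul_pos (by linarith) (by nlinarith)) (by positivity)
  linarith [hkey ▸ this]

lemma Hfun_continuous {b : ℝ} (hb : 1 < b) : Continuous (Hfun b) := by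
  have hb0 : (0:ℝ) < b := by linarith
  have hc : Continuous fun θ : ℝ => b ^ θ := by
    have : (fun θ : ℝ => b ^ θ) = fun θ => Real.exp (Real.log b * θ) := by
      ext θ; rw [Real.rpow_def_of_pos hb0]
    rw [this]
    exact Real.continuous_exp.comp (continuous_const.mul continuous_id)
  exact hc.add (continuous_const.div hc fun θ => (Real.rpow_pos_of_pos hb0 θ).ne')

lemma Hfun_tendsto_atTop {b : ℝ} (hb : 1 < b) : Tendsto (Hfun b) atTop atTop := by
  have hb0 : (0:ℝ) < b := by linarith
  have hc : Tendsto (fun θ : ℝ => b ^ θ) atTop atTop := by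
    have : (fun θ : ℝ => b ^ θ) = fun θ => Real.exp (Real.log b * θ) := by
      ext θ; rw [Real.rpow_def_of_pos hb0]
    rw [this]
    exact Real.tendsto_exp_atTop.comp (Tendsto.const_mul_atTop (Real.log_pos hb) tendsto_id)
  exact tendsto_atTop_mono
    (fun θ => le_add_of_nonneg_right (by positivity : (0:ℝ) ≤ 1 / b ^ θ)) hc

/-- Abstract assembly: if `f θ = L + K/(m - H θ)` away from the pole `s`, with
`H` continuous, strictly increasing on `[0,∞)`, `H s = m` and `H → ∞`, then `f`
has all the required monotonicity, continuity and limit properties. -/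
lemma assemble {f H : ℝ → ℝ} {L K m s : ℝ} (hs0 : 0 < s) (hK : 0 < K)
    (hHc : Continuous H) (hHmono : ∀ θ₁ θ₂, 0 ≤ θ₁ → θ₁ < θ₂ → H θ₁ < H θ₂)
    (hHs : H s = m) (hHtop : Tendsto H atTop atTop)
    (hkey : ∀ θ, 0 ≤ θ → θ ≠ s → f θ = L + K / (m - H θ)) :
    (ContinuousOn f (Set.Ico 0 s) ∧ StrictMonoOn f (Set.Ico 0 s)) ∧
    Tendsto f (nhdsWithin s (Set.Iio s)) atTop ∧
    (ContinuousOn f (Set.Ioi s) ∧ StrictMonoOn f (Set.Ioi s) ∧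
      Tendsto f (nhdsWithin s (Set.Ioi s)) atBot) ∧
    Tendsto f atTop (nhds L) := by
  have hmlt : ∀ θ ∈ Set.Ico 0 s, H θ < m := fun θ hθ => hHs ▸ hHmono θ s hθ.1 hθ.2
  have hmgt : ∀ θ ∈ Set.Ioi s, m < H θ := fun θ hθ => hHs ▸ hHmono s θ hs0.le hθ
  refine ⟨⟨?_, ?_⟩, ?_, ⟨?_, ?_, ?_⟩, ?_⟩
  · -- ContinuousOn on Ico
    apply ContinuousOn.congr (f := fun θ => L + K / (m - H θ))
    · exact continuousOn_const.add (continuousOn_const.div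
        (continuous_const.sub hHc).continuousOn
        (fun θ hθ => (sub_pos.mpr (hmlt θ hθ)).ne'))
    · intro θ hθ; exact hkey θ hθ.1 (ne_of_lt hθ.2)
  · -- StrictMonoOn on Ico
    intro a ha c hc hac
    rw [hkey a ha.1 (ne_of_lt ha.2), hkey c hc.1 (ne_of_lt hc.2)]
    have h1 : H a < H c := hHmono a c ha.1 hac
    have h2 : H c < m := hmlt c hc
    have := div_lt_div_helper' hK (show m - H c < m - H a by linarith)
      (show 0 < (m - H a) * (m - H c) by nlinarith)
    linarith
  · -- Tendsto at s⁻
    have hmem : Set.Ico 0 s ∈ nhdsWithin s (Set.Iio s) :=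
      mem_of_superset (Ioo_mem_nhdsLT_of_mem ⟨hs0, le_refl s⟩) Set.Ioo_subset_Ico_self
    have h0 : Tendsto (fun θ => m - H θ) (nhdsWithin s (Set.Iio s)) (nhds 0) := by
      have h : Tendsto (fun θ => m - H θ) (nhds s) (nhds (m - H s)) :=
        (continuous_const.sub hHc).tendsto s
      rw [hHs, sub_self] at h
      exact h.mono_left nhdsWithin_le_nhds
    have h1 : Tendsto (fun θ => m - H θ) (nhdsWithin s (Set.Iio s)) (nhdsWithin 0 (Set.Ioi 0)) :=
      tendsto_nhdsWithin_iff.mpr ⟨h0, by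
        filter_upwards [hmem] with θ hθ
        exact sub_pos.mpr (hmlt θ hθ)⟩
    have h2 : Tendsto (fun θ => L + K / (m - H θ)) (nhdsWithin s (Set.Iio s)) atTop := by
      apply tendsto_atTop_add_const_left
      simpa [div_eq_mul_inv] using (tendsto_inv_nhdsGT_zero.comp h1).const_mul_atTop hK
    apply h2.congr'
    filter_upwards [hmem] with θ hθ
    exact (hkey θ hθ.1 (ne_of_lt hθ.2)).symm
  · -- ContinuousOn on Ioi
    apply ContinuousOn.congr (f := fun θ => L + K / (m - H θ))
    · exact continuousOn_const.add (continuousOn_const.div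
        (continuous_const.sub hHc).continuousOn
        (fun θ hθ => (sub_neg.mpr (hmgt θ hθ)).ne))
    · intro θ hθ; exact hkey θ (hs0.trans hθ).le (ne_of_gt hθ)
  · -- StrictMonoOn on Ioi
    intro a ha c hc hac
    rw [hkey a (hs0.trans ha).le (ne_of_gt ha), hkey c (hs0.trans hc).le (ne_of_gt hc)]
    have h1 : H a < H c := hHmono a c (hs0.trans ha).le hac
    have h2 : m < H a := hmgt a ha
    have := div_lt_div_helper' hK (show m - H c < m - H a by linarith)
      (show 0 < (m - H a) * (m - H c) by nlinarith)
    linarith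
  · -- Tendsto at s⁺
    have h0 : Tendsto (fun θ => H θ - m) (nhdsWithin s (Set.Ioi s)) (nhds 0) := by
      have h : Tendsto (fun θ => H θ - m) (nhds s) (nhds (H s - m)) :=
        (hHc.sub continuous_const).tendsto s
      rw [hHs, sub_self] at h
      exact h.mono_left nhdsWithin_le_nhds
    have h1 : Tendsto (fun θ => H θ - m) (nhdsWithin s (Set.Ioi s)) (nhdsWithin 0 (Set.Ioi 0)) :=
      tendsto_nhdsWithin_iff.mpr ⟨h0, by
        filter_upwards [self_mem_nhdsWithin] with θ hθ
        exact sub_pos.mpr (hmgt θ hθ)⟩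
    have h2 : Tendsto (fun θ => K * (H θ - m)⁻¹) (nhdsWithin s (Set.Ioi s)) atTop :=
      (tendsto_inv_nhdsGT_zero.comp h1).const_mul_atTop hK
    have h3 : Tendsto (fun θ => L + -(K * (H θ - m)⁻¹)) (nhdsWithin s (Set.Ioi s)) atBot :=
      tendsto_atBot_add_const_left _ L (tendsto_neg_atTop_atBot.comp h2)
    apply h3.congr'
    filter_upwards [self_mem_nhdsWithin] with θ hθ
    rw [hkey θ (hs0.trans hθ).le (ne_of_gt hθ),
      show m - H θ = -(H θ - m) by ring, div_neg, div_eq_mul_inv]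
  · -- Tendsto at +∞
    have h1 : Tendsto (fun θ => H θ - m) atTop atTop := by
      simpa [sub_eq_add_neg] using tendsto_atTop_add_const_right atTop (-m) hHtop
    have h2 : Tendsto (fun θ => (m - H θ)⁻¹) atTop (nhds 0) := by
      have h3 : Tendsto (fun θ => (H θ - m)⁻¹) atTop (nhds 0) := h1.inv_tendsto_atTop
      have h4 : (fun θ => (m - H θ)⁻¹) = fun θ => -((H θ - m)⁻¹) := by
        ext θ; rw [show m - H θ = -(H θ - m) by ring, inv_neg]
      rw [h4]
      simpa using h3.neg
    have h5 : Tendsto (fun θ => L + K * (m - H θ)⁻¹) atTop (nhds (L + K * 0)) :=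
      tendsto_const_nhds.add (h2.const_mul K)
    rw [mul_zero, add_zero] at h5
    apply h5.congr'
    filter_upwards [eventually_gt_atTop s] with θ hθ
    rw [hkey θ (hs0.trans hθ).le (ne_of_gt hθ), div_eq_mul_inv]

/-- The key identity expressing `Cfun` as a Möbius-type function of `Hfun`. -/
lemma Cfun_key (p : ℕ) (α θ : ℝ) (hb : 1 < (p:ℝ)) (hα0 : 0 < α)
    (hθ0 : 0 ≤ θ) (hθs : θ ≠ (1+α)/2) :
    Cfun p α θ = -((p:ℝ)^((1+α)/2))^2/(p:ℝ)
      + ((p:ℝ)^((1+α)/2)*((p:ℝ)-1)*(((p:ℝ)^((1+α)/2))^2-(p:ℝ))/(p:ℝ)^2)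
        / (Hfun (p:ℝ) ((1+α)/2) - Hfun (p:ℝ) θ) := by
  have hb0 : (0:ℝ) < p := by linarith
  have hs0 : 0 < (1+α)/2 := by linarith
  have hx : 1 < (p:ℝ)^((1+α)/2) :=
    (Real.one_lt_rpow_iff_of_pos hb0).mpr (Or.inl ⟨hb, hs0⟩)
  have hu1 : 1 ≤ (p:ℝ)^θ := by
    rw [show (1:ℝ) = (p:ℝ) ^ (0:ℝ) by simp]
    exact (Real.rpow_le_rpow_left_iff hb).mpr hθ0
  have hux : (p:ℝ)^θ ≠ (p:ℝ)^((1+α)/2) := by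
    rcases hθs.lt_or_gt with h | h
    · exact ne_of_lt ((Real.rpow_lt_rpow_left_iff hb).mpr h)
    · exact ne_of_gt ((Real.rpow_lt_rpow_left_iff hb).mpr h)
  have e1 : (p:ℝ) ^ ((1+α)/2 + θ - 1) = (p:ℝ)^((1+α)/2) * (p:ℝ)^θ / p := by
    rw [Real.rpow_sub hb0, Real.rpow_add hb0, Real.rpow_one]
  have e2 : (p:ℝ) ^ (-((1+α)/2 + θ)) = ((p:ℝ)^((1+α)/2) * (p:ℝ)^θ)⁻¹ := by
    rw [Real.rpow_neg hb0.le, Real.rpow_add hb0]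
  have e3 : (p:ℝ) ^ ((1+α)/2 - θ - 1) = (p:ℝ)^((1+α)/2) / ((p:ℝ)^θ * p) := by
    rw [Real.rpow_sub hb0, Real.rpow_sub hb0, Real.rpow_one, div_div]
  have e4 : (p:ℝ) ^ (-((1+α)/2 - θ)) = (p:ℝ)^θ / (p:ℝ)^((1+α)/2) := by
    rw [Real.rpow_neg hb0.le, Real.rpow_sub hb0, inv_div]
  rw [Cfun, gammaP, gammaP, Hfun, Hfun, e1, e2, e3, e4]
  exact frac_eq' (p:ℝ) ((p:ℝ)^((1+α)/2)) ((p:ℝ)^θ) hb hx hu1 hux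

end CfunAux

/-- Properties of `C_α(θ) = -Γ_p((1+α)/2+θ)Γ_p((1+α)/2-θ)` for `0 < α < 1`:
its values at `0` and `(1-α)/2`, continuity and strict monotonicity on
`[0, (1+α)/2)` and on `((1+α)/2, ∞)`, the blow-up `±∞` at `(1+α)/2`, and the
limit `-p^α` at `+∞`, with `-p^α < C_α(0)`. -/
theorem Cfun_properties (p : ℕ) (hp : p.Prime) (α : ℝ) (hα0 : 0 < α) (hα1 : α < 1) :
    Cfun p α 0 = -(gammaP p ((1 + α) / 2)) ^ 2 ∧
    Cfun p α ((1 - α) / 2) = 0 ∧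
    (ContinuousOn (Cfun p α) (Set.Ico 0 ((1 + α) / 2)) ∧
      StrictMonoOn (Cfun p α) (Set.Ico 0 ((1 + α) / 2))) ∧
    Tendsto (Cfun p α) (nhdsWithin ((1 + α) / 2) (Set.Iio ((1 + α) / 2))) atTop ∧
    (ContinuousOn (Cfun p α) (Set.Ioi ((1 + α) / 2)) ∧
      StrictMonoOn (Cfun p α) (Set.Ioi ((1 + α) / 2)) ∧
      Tendsto (Cfun p α) (nhdsWithin ((1 + α) / 2) (Set.Ioi ((1 + α) / 2))) atBot) ∧
    (Tendsto (Cfun p α) atTop (nhds (-(p : ℝ) ^ α)) ∧ -(p : ℝ) ^ α < Cfun p α 0) := by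
  have hb : 1 < (p:ℝ) := by exact_mod_cast hp.one_lt
  have hb0 : (0:ℝ) < p := by linarith
  have hs0 : 0 < (1+α)/2 := by linarith
  -- the square of x = p^((1+α)/2)
  have hsq : ((p:ℝ)^((1+α)/2))^2 = (p:ℝ)^α * (p:ℝ) := by
    rw [← Real.rpow_natCast ((p:ℝ)^((1+α)/2)) 2, ← Real.rpow_mul hb0.le]
    rw [show (1+α)/2 * ((2:ℕ):ℝ) = α + 1 by push_cast; ring,
      Real.rpow_add hb0, Real.rpow_one]
  have hL : -((p:ℝ)^((1+α)/2))^2/(p:ℝ) = -(p:ℝ)^α := by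
    rw [neg_div, hsq, mul_div_assoc, div_self hb0.ne', mul_one]
  have hα : 1 < (p:ℝ)^α := (Real.one_lt_rpow_iff_of_pos hb0).mpr (Or.inl ⟨hb, hα0⟩)
  have hx : 1 < (p:ℝ)^((1+α)/2) :=
    (Real.one_lt_rpow_iff_of_pos hb0).mpr (Or.inl ⟨hb, hs0⟩)
  have hx2 : (p:ℝ) < ((p:ℝ)^((1+α)/2))^2 := by
    rw [hsq]; nlinarith
  have hK : 0 < (p:ℝ)^((1+α)/2)*((p:ℝ)-1)*(((p:ℝ)^((1+α)/2))^2-(p:ℝ))/(p:ℝ)^2 :=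
    div_pos (mul_pos (mul_pos (by linarith) (by linarith)) (by linarith)) (by positivity)
  have hkey : ∀ θ, 0 ≤ θ → θ ≠ (1+α)/2 →
      Cfun p α θ = -(p:ℝ)^α
        + ((p:ℝ)^((1+α)/2)*((p:ℝ)-1)*(((p:ℝ)^((1+α)/2))^2-(p:ℝ))/(p:ℝ)^2)
          / (Hfun (p:ℝ) ((1+α)/2) - Hfun (p:ℝ) θ) := by
    intro θ h1 h2
    rw [Cfun_key p α θ hb hα0 h1 h2, hL]
  obtain ⟨⟨c1, m1⟩, t1, ⟨c2, m2, t2⟩, t3⟩ :=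
    assemble hs0 hK (Hfun_continuous hb) (fun θ₁ θ₂ a b => Hfun_mono hb a b) rfl
      (Hfun_tendsto_atTop hb) hkey
  refine ⟨?_, ?_, ⟨c1, m1⟩, t1, ⟨c2, m2, t2⟩, t3, ?_⟩
  · -- value at 0
    rw [Cfun, add_zero, sub_zero, ← sq]
  · -- value at (1-α)/2
    rw [Cfun, show (1+α)/2 + (1-α)/2 = 1 by ring]
    have : gammaP p 1 = 0 := by
      rw [gammaP, sub_self, Real.rpow_zero, sub_self, zero_div]
    rw [this, zero_mul, neg_zero]
  · -- -p^α < Cfun p α 0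
    rw [hkey 0 le_rfl (ne_of_lt hs0)]
    have hH0 : Hfun (p:ℝ) 0 = 2 := by norm_num [Hfun]
    have hm2 : 0 < Hfun (p:ℝ) ((1+α)/2) - Hfun (p:ℝ) 0 := by
      have := Hfun_mono hb (le_refl (0:ℝ)) hs0
      linarith
    have := div_pos hK hm2
    linarith
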